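/- Let α, β ∈ S_n with support of β contained in M(α) ∪ M(β⁻¹αβ), and suppose at most one point lies in M(β⁻¹αβ) but not in M(α). If there exists an involution ω with M(ω) ⊆ M(α), ω⁻¹αω = α⁻¹, and (ωβ)² fixing every point of M(α), then ω⁻¹βω = β⁻¹. -/

import Mathlib

/-- Lemma 4.2: M(β) ⊆ M(α) ∪ M(α^β), at most one point of M(α^β) is outside M(α),
ω an involution with M(ω) ⊆ M(α), α^ω = α⁻¹ and (ωβ)² fixing every point of M(α);
then β^ω = β⁻¹. -/
theorem stmt_14 {n : ℕ} (α β ω : Equiv.Perm (Fin n))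
    (hβ : β.support ⊆ α.support ∪ (β⁻¹ * α * β).support)
    (hone : ((β⁻¹ * α * β).support \ α.support).card ≤ 1)
    (hinv : ω * ω = 1) (hsupp : ω.support ⊆ α.support)
    (hα : ω⁻¹ * α * ω = α⁻¹)
    (hfix : ∀ x ∈ α.support, ((ω * β) * (ω * β)) x = x) :
    ω⁻¹ * β * ω = β⁻¹ := by
  have hωinv : ω⁻¹ = ω := inv_eq_of_mul_eq_one_left hinv
  set γ : Equiv.Perm (Fin n) := (ω * β) * (ω * β) with hγ
  have hsub : γ.support ⊆ (β⁻¹ * α * β).support \ α.support := by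
    intro x hx
    have hxγ : γ x ≠ x := Equiv.Perm.mem_support.mp hx
    have hxα : x ∉ α.support := fun h => hxγ (hfix x h)
    have hxβ : x ∈ β.support := by
      by_contra hxβ
      have hβx : β x = x := Equiv.Perm.notMem_support.mp hxβ
      have hωx : ω x = x := Equiv.Perm.notMem_support.mp (fun h => hxα (hsupp h))
      apply hxγ
      simp [hγ, Equiv.Perm.mul_apply, hβx, hωx]
    rcases Finset.mem_union.mp (hβ hxβ) with h | h
    · exact absurd h hxα
    · exact Finset.mem_sdiff.mpr ⟨h, hxα⟩
  have hcard : γ.support.card ≤ 1 := le_trans (Finset.card_le_card hsub) hone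
  have hγ1 : γ = 1 := by
    rcases Nat.lt_or_ge γ.support.card 1 with h | h
    · have : γ.support = ∅ := Finset.card_eq_zero.mp (Nat.lt_one_iff.mp h)
      exact Equiv.Perm.support_eq_empty_iff.mp this
    · exact absurd (le_antisymm hcard h) (Equiv.Perm.card_support_ne_one γ)
  have : ω * β * ω * β = 1 := by
    rw [hγ] at hγ1; group at hγ1 ⊢; exact hγ1
  rw [hωinv]
  have := eq_inv_of_mul_eq_one_left (a := ω * β * ω) (b := β) (by exact this)
  rw [← this]
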